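/- Let G be a finite simple graph, π = {W_1,…,W_d} a vertex clique-partition of G, e_π = {U_1,…,U_s} a clique cluster-partition based on π with exactly r clusters that are unions of at least two cliques, and let G^{cc} be the clique cluster-whiskered graph built from this data. Then the set W = {a_1,…,a_d, b_1,…,b_r} of added vertices is a maximal independent vertex set of G^{cc} of cardinality d + r; consequently the independence complex Ind G^{cc} has dimension d + r − 1. -/
import Mathlib


namespace Paper

variable {V : Type*}

/-- `S` is an independent vertex set of the graph `H` (equivalently, of any induced
subgraph of `H` containing `S`): its vertices are pairwise non-adjacent. -/
def IndepOn (H : SimpleGraph V) (S : Set V) : Prop :=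
  ∀ x ∈ S, ∀ y ∈ S, ¬ H.Adj x y

/-- `S` is a maximal independent vertex set of the graph `H`. -/
def MaxIndep (H : SimpleGraph V) (S : Set V) : Prop :=
  IndepOn H S ∧ ∀ T : Set V, IndepOn H T → S ⊆ T → T = S

/-- The data exhibiting the graph `H` (on its full vertex type) as a clique
cluster-whiskered graph `G^{cc}` over the base graph `G` (the induced subgraph of `H`
on `Vg`), built from a vertex clique-partition `π = {W_1, …, W_d}` and a clique
cluster-partition `e_π = {U_1, …, U_s}` based on `π`, by adding `d + r` new vertices
`a_1, …, a_d, b_1, …, b_r`, where `a i` is adjacent exactly to the vertices of `W i`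
and `b j` is adjacent exactly to the vertices of `U j`. -/
structure CcWhiskered (H : SimpleGraph V) (d s r : ℕ) where
  hrs : r ≤ s
  /-- the vertex set of the base graph `G`; the edges of `G` are the edges of `H`
  between vertices of `Vg`, i.e. `G` is the induced subgraph of `H` on `Vg`. -/
  Vg : Set V
  /-- the vertex clique-partition `π = {W_1, …, W_d}` of `G` -/
  W : Fin d → Set V
  /-- the clique cluster-partition `e_π = {U_1, …, U_s}` based on `π` -/
  U : Fin s → Set V
  W_ne : ∀ i, (W i).Nonempty
  W_sub : ∀ i, W i ⊆ Vg
  W_disj : ∀ i j, i ≠ j → Disjoint (W i) (W j)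
  W_cover : Vg ⊆ ⋃ i, W i
  W_clique : ∀ i, ∀ x ∈ W i, ∀ y ∈ W i, x ≠ y → H.Adj x y
  U_ne : ∀ j, (U j).Nonempty
  U_sub : ∀ j, U j ⊆ Vg
  U_disj : ∀ j k, j ≠ k → Disjoint (U j) (U k)
  U_cover : Vg ⊆ ⋃ j, U j
  /-- each clique of `π` is contained in some cluster -/
  W_in_U : ∀ i, ∃ j, W i ⊆ U j
  /-- two distinct cliques of `π` lying in a common cluster have no edge between them -/
  cluster_indep : ∀ i i', i ≠ i' → ∀ j, W i ⊆ U j → W i' ⊆ U j →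
    ∀ x ∈ W i, ∀ y ∈ W i', ¬ H.Adj x y
  /-- the first `r` clusters are unions of at least two cliques of `π` -/
  U_multi : ∀ j : Fin r, ∃ i i' : Fin d, i ≠ i' ∧
    W i ⊆ U (Fin.castLE hrs j) ∧ W i' ⊆ U (Fin.castLE hrs j)
  /-- the remaining `s - r` clusters each coincide with a single clique of `π` -/
  U_single : ∀ j : Fin s, r ≤ (j : ℕ) → ∃ i, U j = W i
  /-- the added whisker vertices `a_1, …, a_d` -/
  a : Fin d → V
  /-- the added whisker vertices `b_1, …, b_r` -/
  b : Fin r → V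
  a_notin : ∀ i, a i ∉ Vg
  b_notin : ∀ j, b j ∉ Vg
  a_inj : Function.Injective a
  b_inj : Function.Injective b
  ab_ne : ∀ i j, a i ≠ b j
  /-- the vertex set of `G^{cc}` is `V(G)` together with the new vertices -/
  total : Set.univ = Vg ∪ Set.range a ∪ Set.range b
  /-- `a i` is adjacent exactly to the vertices of `W i` -/
  a_adj : ∀ i, ∀ w : V, H.Adj (a i) w ↔ w ∈ W i
  /-- `b j` is adjacent exactly to the vertices of `U j` -/
  b_adj : ∀ j, ∀ w : V, H.Adj (b j) w ↔ w ∈ U (Fin.castLE hrs j)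

/-- **Theorem.** The set `W = {a_1, …, a_d, b_1, …, b_r}` of added vertices is a
maximal independent vertex set of `G^{cc}` of cardinality `d + r`; consequently the
independence complex `Ind G^{cc}` has dimension `d + r - 1`, i.e. every independent
vertex set of `G^{cc}` has cardinality at most `d + r`. -/
theorem ccWhiskered_added_vertices_maxIndep [Fintype V]
    (H : SimpleGraph V) (d s r : ℕ) (M : CcWhiskered H d s r) :
    MaxIndep H (Set.range M.a ∪ Set.range M.b) ∧
    (Set.range M.a ∪ Set.range M.b).ncard = d + r ∧
    ∀ S : Set V, IndepOn H S → S.ncard ≤ d + r := by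
  classical
  have hnotVg : ∀ v ∈ Set.range M.a ∪ Set.range M.b, v ∉ M.Vg := by
    rintro v (⟨i, rfl⟩ | ⟨j, rfl⟩)
    · exact M.a_notin i
    · exact M.b_notin j
  have hadjVg : ∀ v ∈ Set.range M.a ∪ Set.range M.b, ∀ w, H.Adj v w → w ∈ M.Vg := by
    rintro v (⟨i, rfl⟩ | ⟨j, rfl⟩) w h
    · exact M.W_sub i ((M.a_adj i w).mp h)
    · exact M.U_sub _ ((M.b_adj j w).mp h)
  have hindep : IndepOn H (Set.range M.a ∪ Set.range M.b) := by
    intro x hx y hy hadj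
    exact hnotVg y hy (hadjVg x hx y hadj)
  have hmem : ∀ x : V, x ∈ M.Vg ∨ (∃ i, M.a i = x) ∨ (∃ j, M.b j = x) := by
    intro x
    have hx : x ∈ M.Vg ∪ Set.range M.a ∪ Set.range M.b := by
      rw [← M.total]; exact Set.mem_univ x
    rcases hx with (h | h) | h
    exacts [Or.inl h, Or.inr (Or.inl h), Or.inr (Or.inr h)]
  refine ⟨⟨hindep, ?_⟩, ?_, ?_⟩
  · intro T hT hsub
    apply Set.Subset.antisymm _ hsub
    intro v hv
    rcases hmem v with hvg | ha | hb
    · obtain ⟨i, hvi⟩ := Set.mem_iUnion.mp (M.W_cover hvg)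
      exact absurd ((M.a_adj i v).mpr hvi)
        (hT _ (hsub (Or.inl ⟨i, rfl⟩)) v hv)
    · exact Or.inl (Set.mem_range.mpr ha)
    · exact Or.inr (Set.mem_range.mpr hb)
  · have hd : Disjoint (Set.range M.a) (Set.range M.b) := by
      rw [Set.disjoint_left]
      rintro x ⟨i, rfl⟩ ⟨j, hj⟩
      exact M.ab_ne i j hj.symm
    rw [Set.ncard_union_eq hd (Set.toFinite _) (Set.toFinite _)]
    have h1 : (Set.range M.a).ncard = d := by
      rw [← Nat.card_coe_set_eq, Nat.card_range_of_injective M.a_inj,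
        Nat.card_eq_fintype_card, Fintype.card_fin]
    have h2 : (Set.range M.b).ncard = r := by
      rw [← Nat.card_coe_set_eq, Nat.card_range_of_injective M.b_inj,
        Nat.card_eq_fintype_card, Fintype.card_fin]
    rw [h1, h2]
  · intro S hS
    choose idx hidx using fun x (h : x ∈ M.Vg) => Set.mem_iUnion.mp (M.W_cover h)
    have hb' : ∀ x, x ∉ M.Vg → ¬ (∃ i, M.a i = x) → ∃ j, M.b j = x := by
      intro x h1 h2
      rcases hmem x with h | h | h
      · exact absurd h h1
      · exact absurd h h2
      · exact h
    set f : V → Fin d ⊕ Fin r := fun x =>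
      if h : x ∈ M.Vg then Sum.inl (idx x h)
      else if h2 : ∃ i, M.a i = x then Sum.inl h2.choose
      else Sum.inr (hb' x h h2).choose with hf
    have hinj : Set.InjOn f S := by
      intro x hx y hy hxy
      by_cases hxV : x ∈ M.Vg <;> by_cases hyV : y ∈ M.Vg
      · rw [hf] at hxy
        simp only [dif_pos hxV, dif_pos hyV, Sum.inl.injEq] at hxy
        by_contra hne
        exact hS x hx y hy
          (M.W_clique (idx x hxV) x (hidx x hxV) y (hxy ▸ hidx y hyV) hne)
      · rcases hmem y with h | h | h
        · exact absurd h hyV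
        · rw [hf] at hxy
          simp only [dif_pos hxV, dif_neg hyV, dif_pos h, Sum.inl.injEq] at hxy
          have hya : M.a (idx x hxV) = y := hxy ▸ h.choose_spec
          have hadj : H.Adj y x := hya ▸ (M.a_adj _ x).mpr (hidx x hxV)
          exact absurd hadj (hS y hy x hx)
        · have hna : ¬ ∃ i, M.a i = y := by
            rintro ⟨i, rfl⟩
            obtain ⟨j, hj⟩ := h
            exact M.ab_ne i j hj.symm
          rw [hf] at hxy
          simp only [dif_pos hxV, dif_neg hyV, dif_neg hna] at hxy
          exact (Sum.inl_ne_inr hxy).elim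
      · rcases hmem x with h | h | h
        · exact absurd h hxV
        · rw [hf] at hxy
          simp only [dif_pos hyV, dif_neg hxV, dif_pos h, Sum.inl.injEq] at hxy
          have hxa : M.a (idx y hyV) = x := hxy ▸ h.choose_spec
          have hadj : H.Adj x y := hxa ▸ (M.a_adj _ y).mpr (hidx y hyV)
          exact absurd hadj (hS x hx y hy)
        · have hna : ¬ ∃ i, M.a i = x := by
            rintro ⟨i, rfl⟩
            obtain ⟨j, hj⟩ := h
            exact M.ab_ne i j hj.symm
          rw [hf] at hxy
          simp only [dif_pos hyV, dif_neg hxV, dif_neg hna] at hxy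
          exact (Sum.inr_ne_inl hxy).elim
      · by_cases hxa : ∃ i, M.a i = x <;> by_cases hya : ∃ i, M.a i = y
        · rw [hf] at hxy
          simp only [dif_neg hxV, dif_neg hyV, dif_pos hxa, dif_pos hya,
            Sum.inl.injEq] at hxy
          rw [← hxa.choose_spec, ← hya.choose_spec, hxy]
        · rw [hf] at hxy
          simp only [dif_neg hxV, dif_neg hyV, dif_pos hxa, dif_neg hya] at hxy
          exact (Sum.inl_ne_inr hxy).elim
        · rw [hf] at hxy
          simp only [dif_neg hxV, dif_neg hyV, dif_pos hya, dif_neg hxa] at hxy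
          exact (Sum.inr_ne_inl hxy).elim
        · rw [hf] at hxy
          simp only [dif_neg hxV, dif_neg hyV, dif_neg hxa, dif_neg hya,
            Sum.inr.injEq] at hxy
          have h1 := (hb' x hxV hxa).choose_spec
          have h2 := (hb' y hyV hya).choose_spec
          rw [← h1, ← h2, hxy]
    calc S.ncard = (f '' S).ncard := (Set.ncard_image_of_injOn hinj).symm
      _ ≤ (Set.univ : Set (Fin d ⊕ Fin r)).ncard :=
          Set.ncard_le_ncard (Set.subset_univ _) Set.finite_univ
      _ = d + r := by simp [Set.ncard_univ]

end Paper
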